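/- arXiv:math/0612473 — 2 statements merged into one kernel-verified Lean document; each statement's English description precedes it below -/
import Mathlib

section
/- Let K be a number field. If there exists an element x ∈ K with x² = −1, then 2 divides the discriminant of K. Equivalently, if the discriminant of K is odd, then K contains no square root of −1 (so ℚ(i) does not embed into K). -/
open NumberField Algebra Matrix Module

/-- If a number field `K` contains a square root of `-1`, then `2` divides the
(absolute) discriminant of `K`. -/
theorem two_dvd_discr_of_sqrt_neg_one (K : Type*) [Field K] [NumberField K]
    (x : K) (hx : x ^ 2 = -1) : (2 : ℤ) ∣ NumberField.discr K := by
  classical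
  -- `x` is integral over `ℤ`
  have hxint : IsIntegral ℤ x := by
    refine ⟨Polynomial.X ^ 2 + Polynomial.C 1, Polynomial.monic_X_pow_add_C 1 (by norm_num), ?_⟩
    simp [hx]
  set i₀ : 𝓞 K := ⟨x, hxint⟩ with hi₀def
  have hi2 : i₀ * i₀ = -1 := by
    ext
    push_cast
    calc (i₀ : K) * (i₀ : K) = x * x := rfl
      _ = -1 := by rw [← hx]; ring
  set b := RingOfIntegers.basis K with hbdef
  set α : 𝓞 K := 1 + i₀ with hαdef
  have hα : α * α = 2 * i₀ := by
    have h : α * α = i₀ * i₀ + 2 * i₀ + 1 := by ring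
    rw [h, hi2]; ring
  set f : ℤ →+* ZMod 2 := Int.castRingHom (ZMod 2) with hfdef
  -- traces of multiples of α are even
  have key : ∀ y : 𝓞 K, ((Algebra.trace ℤ (𝓞 K) (y * α) : ℤ) : ZMod 2) = 0 := by
    intro y
    set z := y * α with hzdef
    have hz : z * z = (2 : ℤ) • (y * y * i₀) := by
      have h : z * z = (y * y) * (α * α) := by rw [hzdef]; ring
      rw [h, hα, zsmul_eq_mul]
      push_cast
      ring
    rw [Algebra.trace_eq_matrix_trace b z]
    have hcast : ((Matrix.trace (Algebra.leftMulMatrix b z) : ℤ) : ZMod 2)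
        = Matrix.trace (f.mapMatrix (Algebra.leftMulMatrix b z)) := by
      simp [Matrix.trace, Matrix.diag, RingHom.mapMatrix_apply, Matrix.map_apply]
    rw [hcast]
    have hnil : IsNilpotent (f.mapMatrix (Algebra.leftMulMatrix b z)) := by
      refine ⟨2, ?_⟩
      rw [← map_pow, sq, ← _root_.map_mul, hz, map_zsmul, map_zsmul]
      have h20 : ((2 : ℤ) : ZMod 2) = 0 := rfl
      ext i j
      rw [Matrix.smul_apply, zsmul_eq_mul, h20, zero_mul, Matrix.zero_apply]
    exact (Matrix.isNilpotent_trace_of_isNilpotent hnil).eq_zero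
  -- the reduction mod 2 of the trace matrix kills the coordinate vector of α
  set c : Free.ChooseBasisIndex ℤ (𝓞 K) → ℤ := fun j => b.repr α j with hcdef
  set v : Free.ChooseBasisIndex ℤ (𝓞 K) → ZMod 2 := fun j => ((c j : ℤ) : ZMod 2) with hvdef
  have hmul : ∀ i : Free.ChooseBasisIndex ℤ (𝓞 K), b i * α = ∑ j : Free.ChooseBasisIndex ℤ (𝓞 K), c j • (b i * b j) := by
    intro i
    conv_lhs => rw [← b.sum_repr α]
    rw [Finset.mul_sum]
    exact Finset.sum_congr rfl fun j _ => (mul_smul_comm _ _ _)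
  have hMv : ((Algebra.traceMatrix ℤ (⇑b)).map f).mulVec v = 0 := by
    funext i
    have h1 : (Algebra.trace ℤ (𝓞 K)) (b i * α)
        = ∑ j : Free.ChooseBasisIndex ℤ (𝓞 K), Algebra.trace ℤ (𝓞 K) (b i * b j) * c j := by
      rw [hmul i, map_sum]
      exact Finset.sum_congr rfl fun j _ => by
        rw [map_zsmul, smul_eq_mul, mul_comm]
    have : (((Algebra.traceMatrix ℤ (⇑b)).map f).mulVec v) i
        = ((∑ j : Free.ChooseBasisIndex ℤ (𝓞 K), Algebra.trace ℤ (𝓞 K) (b i * b j) * c j : ℤ) : ZMod 2) := by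
      simp [Matrix.mulVec, dotProduct, Algebra.traceMatrix_apply,
        Algebra.traceForm_apply, Matrix.map_apply, hvdef]
    rw [Pi.zero_apply, this, ← h1, key (b i)]
  -- the coordinate vector of α is nonzero mod 2
  have hvne : v ≠ 0 := by
    intro hv0
    have hdvd : ∀ j : Free.ChooseBasisIndex ℤ (𝓞 K), (2 : ℤ) ∣ c j := by
      intro j
      have : ((c j : ℤ) : ZMod 2) = 0 := congrFun hv0 j
      exact_mod_cast (ZMod.intCast_zmod_eq_zero_iff_dvd (c j) 2).mp this
    choose d hd using hdvd
    set β : 𝓞 K := ∑ j : Free.ChooseBasisIndex ℤ (𝓞 K), d j • b j with hβdef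
    have h2β : 2 * β = α := by
      have h : (2 : ℤ) • β = α := by
        rw [hβdef, Finset.smul_sum]
        have : ∀ j ∈ Finset.univ, (2 : ℤ) • d j • b j = c j • b j := by
          intro j _
          rw [smul_smul, ← hd j]
        rw [Finset.sum_congr rfl this]
        exact b.sum_repr α
      rw [← h, zsmul_eq_mul]
      push_cast
      ring
    have h2ne : (2 : 𝓞 K) ≠ 0 := by
      intro h
      have : ((2 : 𝓞 K) : K) = 0 := by rw [h]; simp
      simp at this
    have hii : i₀ = 2 * (β * β) := by
      have h4 : 2 * (2 * (β * β)) = 2 * i₀ := by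
        rw [← hα, ← h2β]; ring
      exact (mul_left_cancel₀ h2ne h4).symm
    have hiu : IsUnit i₀ := IsUnit.of_mul_eq_one (a := i₀) (-i₀) (by rw [mul_neg, hi2, neg_neg])
    have h2u : IsUnit (2 : 𝓞 K) := isUnit_of_mul_isUnit_left (hii ▸ hiu)
    -- norm gives a contradiction
    have hnorm : IsUnit (Algebra.norm ℤ (2 : 𝓞 K)) := h2u.map (Algebra.norm ℤ)
    have h2alg : (2 : 𝓞 K) = algebraMap ℤ (𝓞 K) 2 := by simp
    rw [h2alg, Algebra.norm_algebraMap_of_basis b] at hnorm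
    have hne : Nonempty (Free.ChooseBasisIndex ℤ (𝓞 K)) := b.index_nonempty
    have hcard : 1 ≤ Fintype.card (Free.ChooseBasisIndex ℤ (𝓞 K)) := Fintype.card_pos
    have hgt : (1 : ℤ) < 2 ^ Fintype.card (Free.ChooseBasisIndex ℤ (𝓞 K)) :=
      one_lt_pow₀ (by norm_num) (by omega)
    have hpos : (0 : ℤ) < 2 ^ Fintype.card (Free.ChooseBasisIndex ℤ (𝓞 K)) :=
      pow_pos (by norm_num) _
    rcases Int.isUnit_iff.mp hnorm with h | h <;> linarith
  -- conclude: the discriminant is 0 mod 2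
  have hdet : ((NumberField.discr K : ℤ) : ZMod 2) = 0 := by
    have hdiscr : NumberField.discr K = (Algebra.traceMatrix ℤ (⇑b)).det := by
      rw [← NumberField.discr_eq_discr K b, Algebra.discr_def]
    rw [hdiscr]
    show f ((Algebra.traceMatrix ℤ (⇑b)).det) = 0
    rw [RingHom.map_det]
    exact Matrix.exists_mulVec_eq_zero_iff.mp ⟨v, hvne, hMv⟩
  exact_mod_cast (ZMod.intCast_zmod_eq_zero_iff_dvd _ 2).mp hdet
end

section
/- Let K be a number field and θ ∈ 𝓞_K an algebraic integer with K = ℚ(θ). If the reduction modulo 2 of the minimal polynomial of θ over ℤ is squarefree in (ℤ/2ℤ)[X], then there is no element x ∈ K with x² = −1. -/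
open Polynomial NumberField

/-- If `K = ℚ(θ)` with `θ` an algebraic integer whose minimal polynomial over `ℤ`
is squarefree modulo `2`, then `K` contains no square root of `-1`. -/
theorem no_sqrt_neg_one_of_squarefree_minpoly_mod_two
    (K : Type*) [Field K] [NumberField K] (θ : 𝓞 K)
    (hθ : Algebra.adjoin ℚ {(θ : K)} = ⊤)
    (hsf : Squarefree ((minpoly ℤ θ).map (Int.castRingHom (ZMod 2)))) :
    ¬ ∃ x : K, x ^ 2 = -1 := by
  rintro ⟨x, hx2⟩
  have hθint : IsIntegral ℤ (θ : K) := θ.isIntegral_coe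
  set f : ℤ[X] := minpoly ℤ (θ : K) with hfdef
  have hmf : f = minpoly ℤ θ := minpoly.algebraMap_eq RingOfIntegers.coe_injective θ
  have hsf' : Squarefree (f.map (Int.castRingHom (ZMod 2))) := by rw [hmf]; exact hsf
  set R := Algebra.adjoin ℤ ({(θ : K)} : Set K) with hRdef
  -- `AdjoinRoot f ⧸ (2)` is reduced since `f` is squarefree mod 2
  have hred : IsReduced (AdjoinRoot f ⧸ (Ideal.span {(2 : AdjoinRoot f)})) := by
    have h2 : (Ideal.span {(2 : ℤ)}).map (AdjoinRoot.of f) =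
        Ideal.span {(2 : AdjoinRoot f)} := by
      rw [Ideal.map_span, Set.image_singleton, map_ofNat]
    let E1 := AdjoinRoot.quotAdjoinRootEquivQuotPolynomialQuot (Ideal.span {(2 : ℤ)}) f
    let σ : (ℤ ⧸ Ideal.span {(2 : ℤ)}) ≃+* ZMod 2 :=
      (Ideal.quotEquivOfEq (by norm_num)).trans (Int.quotientSpanNatEquivZMod 2)
    let ψ : (ℤ ⧸ Ideal.span {(2 : ℤ)})[X] ≃+* (ZMod 2)[X] := Polynomial.mapEquiv σ
    have himg : (ψ : (ℤ ⧸ Ideal.span {(2 : ℤ)})[X] →+* (ZMod 2)[X])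
        (f.map (Ideal.Quotient.mk (Ideal.span {(2 : ℤ)}))) =
        f.map (Int.castRingHom (ZMod 2)) := by
      show (f.map (Ideal.Quotient.mk (Ideal.span {(2 : ℤ)}))).map (σ : _ →+* ZMod 2) = _
      rw [Polynomial.map_map, show ((σ : (ℤ ⧸ Ideal.span {(2 : ℤ)}) →+* ZMod 2).comp
        (Ideal.Quotient.mk (Ideal.span {(2 : ℤ)}))) = Int.castRingHom (ZMod 2) from
        RingHom.ext_int _ _]
    have hid : Ideal.span {f.map (Int.castRingHom (ZMod 2))} =
        (Ideal.span {f.map (Ideal.Quotient.mk (Ideal.span {(2 : ℤ)}))}).map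
          (ψ : (ℤ ⧸ Ideal.span {(2 : ℤ)})[X] →+* (ZMod 2)[X]) := by
      rw [Ideal.map_span, Set.image_singleton, himg]
    let E2 := Ideal.quotientEquiv _ _ ψ hid
    let Efull := (Ideal.quotEquivOfEq h2.symm).trans (E1.trans E2)
    have hr2 : IsReduced ((ZMod 2)[X] ⧸ Ideal.span {f.map (Int.castRingHom (ZMod 2))}) :=
      (Ideal.isRadical_iff_quotient_reduced _).mp
        (isRadical_iff_span_singleton.mp hsf'.isRadical)
    exact isReduced_of_injective (Efull : AdjoinRoot f ⧸ (Ideal.span {(2 : AdjoinRoot f)}) →+*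
        ((ZMod 2)[X] ⧸ Ideal.span {f.map (Int.castRingHom (ZMod 2))}))
      Efull.injective
  -- the embedding of `AdjoinRoot f` into `K` with image `R`
  let e : AdjoinRoot f ≃ₐ[ℤ] R := minpoly.equivAdjoin hθint
  let φ : AdjoinRoot f →ₐ[ℤ] K := R.val.comp e.toAlgHom
  have hφinj : Function.Injective φ := Subtype.val_injective.comp e.injective
  have hφmem : ∀ u, φ u ∈ R := fun u => (e u).2
  have hφsurj : ∀ a : K, a ∈ R → ∃ u, φ u = a := by
    intro a ha
    refine ⟨e.symm ⟨a, ha⟩, ?_⟩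
    show ((e (e.symm ⟨a, ha⟩) : R) : K) = a
    rw [e.apply_symm_apply]
  -- key: in `R`, if `a ^ 2 = 2 * b` with `b ∈ R`, then `a = 2 * c` with `c ∈ R`
  have key : ∀ a b : K, a ∈ R → b ∈ R → a ^ 2 = 2 * b → ∃ c ∈ R, a = 2 * c := by
    intro a b ha hb hab
    obtain ⟨u, hu⟩ := hφsurj a ha
    obtain ⟨v, hv⟩ := hφsurj b hb
    have huv : u ^ 2 = 2 * v := by
      apply hφinj
      rw [map_pow, map_mul, map_ofNat, hu, hv, hab]
    have h2 : Ideal.Quotient.mk (Ideal.span {(2 : AdjoinRoot f)}) u = 0 := by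
      have hnil : IsNilpotent (Ideal.Quotient.mk (Ideal.span {(2 : AdjoinRoot f)}) u) := by
        refine ⟨2, ?_⟩
        rw [← map_pow, huv, Ideal.Quotient.eq_zero_iff_mem, Ideal.mem_span_singleton]
        exact dvd_mul_right 2 v
      exact hnil.eq_zero
    rw [Ideal.Quotient.eq_zero_iff_mem, Ideal.mem_span_singleton] at h2
    obtain ⟨w, hw⟩ := h2
    exact ⟨φ w, hφmem w, by rw [← hu, hw, map_mul, map_ofNat]⟩
  -- there is a nonzero integer `d` with `d • x ∈ R`
  have hxR : ∃ d : ℤ, d ≠ 0 ∧ (d : K) * x ∈ R := by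
    have hx' : x ∈ Algebra.adjoin ℚ {(θ : K)} := by rw [hθ]; trivial
    rw [Algebra.adjoin_singleton_eq_range_aeval] at hx'
    obtain ⟨p, hp'⟩ := hx'
    have hp : (aeval (θ : K)) p = x := hp'
    suffices h : ∀ q : ℚ[X], ∃ d : ℤ, d ≠ 0 ∧ (d : K) * (aeval (θ : K)) q ∈ R by
      obtain ⟨d, hd, hmem⟩ := h p
      exact ⟨d, hd, by rwa [hp] at hmem⟩
    intro q
    induction q using Polynomial.induction_on with
    | C a =>
      refine ⟨(a.den : ℤ), by exact_mod_cast a.den_nz, ?_⟩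
      have hcast : ((a.den : ℤ) : K) * (aeval (θ : K)) (C a) = ((a.num : ℤ) : K) := by
        rw [aeval_C]
        have hden : ((a.den : ℚ)) * a = (a.num : ℚ) := Rat.den_mul_eq_num a
        calc ((a.den : ℤ) : K) * (algebraMap ℚ K) a
            = (algebraMap ℚ K) ((a.den : ℚ) * a) := by
              rw [map_mul]; norm_num
          _ = (algebraMap ℚ K) ((a.num : ℚ)) := by rw [hden]
          _ = ((a.num : ℤ) : K) := by norm_num
      rw [hcast]
      exact R.intCast_mem a.num
    | add p q hp hq =>
      obtain ⟨d1, hd1, m1⟩ := hp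
      obtain ⟨d2, hd2, m2⟩ := hq
      refine ⟨d1 * d2, mul_ne_zero hd1 hd2, ?_⟩
      have hexp : ((d1 * d2 : ℤ) : K) * (aeval (θ : K)) (p + q) =
          ((d2 : ℤ) : K) * (((d1 : ℤ) : K) * (aeval (θ : K)) p) +
          ((d1 : ℤ) : K) * (((d2 : ℤ) : K) * (aeval (θ : K)) q) := by
        rw [map_add]; push_cast; ring
      rw [hexp]
      exact add_mem (mul_mem (R.intCast_mem d2) m1) (mul_mem (R.intCast_mem d1) m2)
    | monomial n a ih =>
      obtain ⟨d, hd, hm⟩ := ih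
      refine ⟨d, hd, ?_⟩
      have hexp : ((d : ℤ) : K) * (aeval (θ : K)) (C a * X ^ (n + 1)) =
          (((d : ℤ) : K) * (aeval (θ : K)) (C a * X ^ n)) * (θ : K) := by
        simp [pow_succ]; ring
      rw [hexp]
      exact mul_mem hm (Algebra.self_mem_adjoin_singleton ℤ _)
  obtain ⟨d, hd0, hdR⟩ := hxR
  have hnR : ((d.natAbs : ℕ) : K) * x ∈ R := by
    rcases Int.natAbs_eq d with h | h
    · rw [← Int.cast_natCast (R := K), ← h]; exact hdR
    · have h' : (d.natAbs : ℤ) = -d := by omega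
      rw [← Int.cast_natCast (R := K), h', Int.cast_neg, neg_mul]
      exact neg_mem hdR
  have hn0 : d.natAbs ≠ 0 := Int.natAbs_ne_zero.mpr hd0
  have hmodd : ¬ (2 ∣ d.natAbs / 2 ^ (d.natAbs.factorization 2)) :=
    Nat.not_dvd_ordCompl Nat.prime_two hn0
  have hnk : 2 ^ (d.natAbs.factorization 2) * (d.natAbs / 2 ^ (d.natAbs.factorization 2)) =
      d.natAbs := Nat.ordProj_mul_ordCompl_eq_self d.natAbs 2
  -- descent on the power of two
  have final : ∀ (k m : ℕ), ¬ (2 ∣ m) → (((2 ^ k * m : ℕ) : K) * x ∈ R) → False := by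
    intro k
    induction k with
    | zero =>
      intro m hm hmem
      rw [pow_zero, one_mul] at hmem
      have hmmem : ((m : ℕ) : K) ∈ R := R.natCast_mem m
      have hsq : (((m : ℕ) : K) * x + ((m : ℕ) : K)) ^ 2 =
          2 * (((m : ℕ) : K) * (((m : ℕ) : K) * x)) := by
        linear_combination ((m : ℕ) : K) ^ 2 * hx2
      obtain ⟨c, hc, heq⟩ := key _ _ (add_mem hmem hmmem) (mul_mem hmmem hmem) hsq
      -- heq : m * x + m = 2 * c
      have hcint : IsIntegral ℤ c := adjoin_le_integralClosure hθint hc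
      have e3 : (((m : ℕ) : K) * x + ((m : ℕ) : K)) ^ 4 = -4 * ((m : ℕ) : K) ^ 4 := by
        linear_combination ((m : ℕ) : K) ^ 4 * (x ^ 2 + 4 * x + 5) * hx2
      have h16 : (16 : K) * c ^ 4 = -4 * ((m : ℕ) : K) ^ 4 := by
        rw [show (16 : K) * c ^ 4 = ((2 : K) * c) ^ 4 from by ring, ← heq]
        exact e3
      have hq4 : (4 : K) * c ^ 4 = -(((m : ℕ) : K)) ^ 4 := by
        linear_combination (1 / 4 : K) * h16
      have hqQ : c ^ 4 = algebraMap ℚ K (-((m : ℚ)) ^ 4 / 4) := by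
        rw [map_div₀, map_neg, map_pow, map_ofNat, map_natCast,
          eq_div_iff (by norm_num : (4 : K) ≠ 0)]
        linear_combination hq4
      have hint4 : IsIntegral ℤ (c ^ 4) := hcint.pow 4
      rw [hqQ] at hint4
      have hintQ : IsIntegral ℤ (-((m : ℚ)) ^ 4 / 4) :=
        (isIntegral_algebraMap_iff (algebraMap ℚ K).injective).mp hint4
      obtain ⟨y, hy⟩ := IsIntegrallyClosed.isIntegral_iff.mp hintQ
      have hy4 : (4 : ℤ) * y = -((m : ℤ)) ^ 4 := by
        have hcast : ((4 * y : ℤ) : ℚ) = ((-((m : ℤ)) ^ 4 : ℤ) : ℚ) := by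
          push_cast
          have hy' : (y : ℚ) = -(m : ℚ) ^ 4 / 4 := by exact_mod_cast hy
          rw [hy']; ring
        exact_mod_cast hcast
      have hdvd : (2 : ℕ) ∣ m ^ 4 := by
        have h4 : (4 : ℤ) ∣ ((m ^ 4 : ℕ) : ℤ) := ⟨-y, by push_cast; linarith [hy4]⟩
        have h2' : (2 : ℤ) ∣ ((m ^ 4 : ℕ) : ℤ) := dvd_trans ⟨2, by norm_num⟩ h4
        exact_mod_cast h2'
      exact hm (Nat.Prime.dvd_of_dvd_pow Nat.prime_two hdvd)
    | succ k ih =>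
      intro m hm hmem
      have hMmem : ((2 ^ (2 * k + 1) * m ^ 2 : ℕ) : K) ∈ R :=
        R.natCast_mem (2 ^ (2 * k + 1) * m ^ 2)
      have hsq : (((2 ^ (k + 1) * m : ℕ) : K) * x) ^ 2 =
          2 * (-((2 ^ (2 * k + 1) * m ^ 2 : ℕ) : K)) := by
        rw [mul_pow, hx2]
        push_cast
        ring
      obtain ⟨c, hc, heq⟩ := key _ _ hmem (neg_mem hMmem) hsq
      have hcast : ((2 ^ (k + 1) * m : ℕ) : K) = 2 * ((2 ^ k * m : ℕ) : K) := by
        push_cast; ring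
      have h2c : (2 : K) * (((2 ^ k * m : ℕ) : K) * x) = 2 * c := by
        rw [← mul_assoc, ← hcast]; exact heq
      have hxc : ((2 ^ k * m : ℕ) : K) * x = c :=
        mul_left_cancel₀ (by norm_num : (2 : K) ≠ 0) h2c
      exact ih m hm (hxc ▸ hc)
  exact final (d.natAbs.factorization 2) (d.natAbs / 2 ^ (d.natAbs.factorization 2)) hmodd
    (by rw [hnk]; exact hnR)
end
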